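/- Let G be the symmetric 7×7 integer matrix indexed by {h, v1, ..., v6} where the v_i correspond to the vertices of K(3,3), with entries G(h,h) = 6, G(v_i,v_i) = −2, G(h,v_i) = 1 for all i, and G(v_i,v_j) = 1 if v_i and v_j are adjacent in K(3,3) and 0 otherwise (i ≠ j). Then G has rank 6, and the associated real quadratic form has exactly one positive eigenvalue (i.e., the lattice is hyperbolic of signature (1,5)). -/

import Mathlib

/-- Adjacency of `K(3,3)` on vertices `0,…,5`, with parts `{0,1,2}` and
`{3,4,5}`. -/
def k33Adj (a b : ℕ) : Prop := a / 3 ≠ b / 3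

instance : DecidableRel k33Adj := fun a b => by unfold k33Adj; infer_instance

/-- Gram matrix of `h` (with `h² = 6`) together with the six lines of a
`K(3,3)` hyperplane section: index `0` is `h`, indices `1,…,6` are the
vertices of `K(3,3)`. -/
def gramK33 : Matrix (Fin 7) (Fin 7) ℤ :=
  Matrix.of fun i j =>
    if i = 0 ∧ j = 0 then 6
    else if i = 0 ∨ j = 0 then 1
    else if i = j then -2
    else if k33Adj (i.val - 1) (j.val - 1) then 1 else 0

namespace GramK33Aux

open Matrix

lemma map_mul_cast {F : Type*} [Field F] {l m n : Type*} [Fintype m]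
    (M : Matrix l m ℤ) (N : Matrix m n ℤ) :
    (M * N).map (Int.cast : ℤ → F) = M.map Int.cast * N.map Int.cast := by
  ext i j
  simp only [Matrix.map_apply, Matrix.mul_apply]
  push_cast
  rfl

/-- Lower-right `6×6` block of the Gram matrix. -/
def C6 : Matrix (Fin 6) (Fin 6) ℤ :=
  Matrix.of fun i j => if i = j then -2 else if k33Adj i.val j.val then 1 else 0

/-- `-80` times the inverse of `C6`. -/
def M6 : Matrix (Fin 6) (Fin 6) ℤ :=
  Matrix.of fun i j => if i = j then 16 else if k33Adj i.val j.val then -16 else -24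

/-- Row selection matrix picking rows `1,…,6`. -/
def P6 : Matrix (Fin 6) (Fin 7) ℤ := Matrix.of fun i j => if j.val = i.val + 1 then 1 else 0

/-- Kernel vector of the Gram matrix, as a one-column matrix. -/
def B7 : Matrix (Fin 7) (Fin 1) ℤ := Matrix.of fun i _ => if i = 0 then 1 else -1

lemma hC6M6 : C6 * M6 = Matrix.diagonal (fun _ => (-80 : ℤ)) := by decide

lemma hPAP : P6 * gramK33 * P6ᵀ = C6 := by decide

lemma hAB : gramK33 * B7 = 0 := by decide

section RankPart

def Aq : Matrix (Fin 7) (Fin 7) ℚ := gramK33.map (Int.cast : ℤ → ℚ)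
def C6q : Matrix (Fin 6) (Fin 6) ℚ := C6.map (Int.cast : ℤ → ℚ)
def M6q : Matrix (Fin 6) (Fin 6) ℚ := M6.map (Int.cast : ℤ → ℚ)
def P6q : Matrix (Fin 6) (Fin 7) ℚ := P6.map (Int.cast : ℤ → ℚ)
def B7q : Matrix (Fin 7) (Fin 1) ℚ := B7.map (Int.cast : ℤ → ℚ)

lemma hC6M6q : C6q * M6q = Matrix.diagonal (fun _ => (-80 : ℚ)) := by
  have h := congrArg (fun M => M.map (Int.cast : ℤ → ℚ)) hC6M6
  simp only [map_mul_cast] at h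
  rw [C6q, M6q]; refine h.trans ?_
  ext i j
  by_cases hij : i = j <;>
    simp [Matrix.map_apply, Matrix.diagonal_apply, hij]

lemma hPAPq : P6q * Aq * P6qᵀ = C6q := by
  have h := congrArg (fun M => M.map (Int.cast : ℤ → ℚ)) hPAP
  simp only [map_mul_cast, Matrix.transpose_map] at h
  rw [P6q, Aq, C6q]
  exact h

lemma hABq : Aq * B7q = 0 := by
  have h := congrArg (fun M => M.map (Int.cast : ℤ → ℚ)) hAB
  simp only [map_mul_cast] at h
  rw [Aq, B7q]; refine h.trans ?_
  ext i j
  simp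

lemma hC6q_unit : IsUnit C6q := by
  apply (Matrix.isUnit_iff_isUnit_det _).mpr
  apply Matrix.isUnit_det_of_right_inverse (B := (-80 : ℚ)⁻¹ • M6q)
  rw [Matrix.mul_smul, hC6M6q]
  ext i j
  by_cases hij : i = j <;>
    simp [Matrix.diagonal_apply, Matrix.one_apply, hij] <;> norm_num

lemma rank_B7q : B7q.rank = 1 := by
  rw [← Matrix.rank_transpose]
  have hli : LinearIndependent ℚ (B7qᵀ) := by
    apply linearIndependent_unique_iff.mpr
    intro hz
    have h0 := congrFun hz 0
    simp [B7q, B7, Matrix.transpose_apply, Matrix.map_apply] at h0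
  simpa using hli.rank_matrix (M := B7qᵀ)

lemma rank_Aq : Aq.rank = 6 := by
  have hupper : Aq.rank + B7q.rank ≤ 7 := by
    simpa using Matrix.rank_add_rank_le_card_of_mul_eq_zero hABq
  rw [rank_B7q] at hupper
  have h1 : C6q.rank = 6 := by
    simpa using Matrix.rank_of_isUnit _ hC6q_unit
  have h2 : C6q.rank ≤ (Aq * P6qᵀ).rank := by
    rw [← hPAPq, Matrix.mul_assoc]
    exact Matrix.rank_mul_le_right _ _
  have h3 : (Aq * P6qᵀ).rank ≤ Aq.rank := Matrix.rank_mul_le_left _ _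
  omega

end RankPart

section SignaturePart

noncomputable def Ar : Matrix (Fin 7) (Fin 7) ℝ := gramK33.map (Int.cast : ℤ → ℝ)

lemma sos (x : Fin 7 → ℝ) : 6 * dotProduct x (Ar.mulVec x) ≤ (Ar.mulVec x 0)^2 := by
  simp (config := { decide := true }) only [Ar, Matrix.mulVec, dotProduct,
    Fin.sum_univ_seven, Matrix.map_apply, gramK33, Matrix.of_apply]
  norm_num [k33Adj]
  nlinarith [sq_nonneg (x 1 - x 2), sq_nonneg (x 1 - x 3), sq_nonneg (x 2 - x 3),
    sq_nonneg (x 4 - x 5), sq_nonneg (x 4 - x 6), sq_nonneg (x 5 - x 6),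
    sq_nonneg (x 1 + x 2 + x 3 - x 4 - x 5 - x 6)]

variable (h : Ar.IsHermitian)

lemma heig (i : Fin 7) :
    Ar *ᵥ ⇑(h.eigenvectorBasis i) = h.eigenvalues i • ⇑(h.eigenvectorBasis i) :=
  h.mulVec_eigenvectorBasis i

lemma hdot (i j : Fin 7) :
    dotProduct ⇑(h.eigenvectorBasis i) ⇑(h.eigenvectorBasis j)
      = if i = j then 1 else 0 := by
  have h' := orthonormal_iff_ite.mp h.eigenvectorBasis.orthonormal i j
  simpa [PiLp.inner_apply, RCLike.inner_apply, dotProduct, conj_trivial, mul_comm] using h'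

lemma hq (i : Fin 7) :
    dotProduct ⇑(h.eigenvectorBasis i) (Ar *ᵥ ⇑(h.eigenvectorBasis i))
      = h.eigenvalues i := by
  rw [heig]
  simp [dotProduct_smul, hdot h i i, smul_eq_mul]

lemma h0 (i : Fin 7) : (Ar *ᵥ ⇑(h.eigenvectorBasis i)) 0
    = h.eigenvalues i * h.eigenvectorBasis i 0 := by
  rw [heig]; simp

lemma step_pos (i : Fin 7) (hi : 0 < h.eigenvalues i) : h.eigenvectorBasis i 0 ≠ 0 := by
  intro h00
  have hs := sos ⇑(h.eigenvectorBasis i)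
  rw [hq h i, h0 h i, h00] at hs
  nlinarith

lemma uniq (i j : Fin 7) (hi : 0 < h.eigenvalues i) (hj : 0 < h.eigenvalues j)
    (hij : i ≠ j) : False := by
  have hαne : h.eigenvalues j * h.eigenvectorBasis j 0 ≠ 0 :=
    mul_ne_zero (ne_of_gt hj) (step_pos h j hj)
  have hβne : h.eigenvalues i * h.eigenvectorBasis i 0 ≠ 0 :=
    mul_ne_zero (ne_of_gt hi) (step_pos h i hi)
  set a : Fin 7 → ℝ := ⇑(h.eigenvectorBasis i) with ha
  set b : Fin 7 → ℝ := ⇑(h.eigenvectorBasis j) with hb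
  set α : ℝ := h.eigenvalues j * b 0 with hα
  set β : ℝ := h.eigenvalues i * a 0 with hβ
  have hmv : Ar *ᵥ (α • a - β • b)
      = (α * h.eigenvalues i) • a - (β * h.eigenvalues j) • b := by
    rw [Matrix.mulVec_sub, Matrix.mulVec_smul, Matrix.mulVec_smul, ha, hb,
      heig, heig, ← ha, ← hb, smul_smul, smul_smul]
    try rfl
  have hw0 : (Ar *ᵥ (α • a - β • b)) 0 = 0 := by
    rw [hmv]
    simp only [Pi.sub_apply, Pi.smul_apply, smul_eq_mul]
    rw [hα, hβ]
    ring
  have h1 : dotProduct a a = 1 := by rw [ha]; simpa using hdot h i i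
  have h2 : dotProduct b b = 1 := by rw [hb]; simpa using hdot h j j
  have h3 : dotProduct a b = 0 := by rw [ha, hb]; simpa [hij] using hdot h i j
  have h4 : dotProduct b a = 0 := by rw [ha, hb]; simpa [hij.symm] using hdot h j i
  have hqw : dotProduct (α • a - β • b) (Ar *ᵥ (α • a - β • b))
      = α * α * h.eigenvalues i + β * β * h.eigenvalues j := by
    rw [hmv]
    simp only [sub_dotProduct, dotProduct_sub, smul_dotProduct,
      dotProduct_smul, h1, h2, h3, h4, smul_eq_mul]
    ring
  have hs := sos (α • a - β • b)
  rw [hqw, hw0] at hs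
  have hp1 : 0 < α * α := mul_self_pos.mpr hαne
  have hp2 : 0 < β * β := mul_self_pos.mpr hβne
  nlinarith [mul_pos hp1 hi, mul_pos hp2 hj]

lemma exists_pos : ∃ i, 0 < h.eigenvalues i := by
  by_contra hc
  push_neg at hc
  have hneg : ∀ x : Fin 7 → ℝ, dotProduct x (Ar *ᵥ x) ≤ 0 := by
    intro x
    have hAr := h.spectral_theorem
    set U : Matrix (Fin 7) (Fin 7) ℝ := (h.eigenvectorUnitary : Matrix (Fin 7) (Fin 7) ℝ) with hU
    have hvm : Matrix.vecMul x U = (star U) *ᵥ x := by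
      ext j
      simp [Matrix.vecMul, Matrix.mulVec, dotProduct, Matrix.star_apply, mul_comm]
    calc dotProduct x (Ar *ᵥ x)
        = dotProduct ((star U) *ᵥ x)
            ((Matrix.diagonal (RCLike.ofReal ∘ h.eigenvalues)) *ᵥ ((star U) *ᵥ x)) := by
          conv_lhs => rw [hAr]
          rw [Unitary.conjStarAlgAut_apply, ← hU, ← Matrix.mulVec_mulVec, ← Matrix.mulVec_mulVec, Matrix.dotProduct_mulVec, hvm]
      _ ≤ 0 := by
          apply Finset.sum_nonpos
          intro k _
          rw [Matrix.mulVec_diagonal]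
          have hk := hc k
          have : (RCLike.ofReal ∘ h.eigenvalues) k = h.eigenvalues k := rfl
          rw [this]
          nlinarith [sq_nonneg (((star U) *ᵥ x) k)]
  have h6 := hneg (Pi.single 0 1)
  have hval : dotProduct (Pi.single (0 : Fin 7) (1:ℝ)) (Ar *ᵥ (Pi.single 0 1)) = 6 := by
    simp (config := { decide := true }) only [Ar, Matrix.mulVec, dotProduct,
      Fin.sum_univ_seven, Matrix.map_apply, gramK33, Matrix.of_apply, Pi.single_apply]
    norm_num
  rw [hval] at h6
  norm_num at h6

end SignaturePart

end GramK33Aux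

/-- The Gram matrix of the `K(3,3)` configuration in degree 6 has rank 6, and
the associated real symmetric matrix has exactly one positive eigenvalue
(hyperbolic signature `(1,5)`). -/
theorem gramK33_rank_and_signature :
    (gramK33.map (Int.cast : ℤ → ℚ)).rank = 6 ∧
    ∀ h : (gramK33.map (Int.cast : ℤ → ℝ)).IsHermitian,
      (Finset.univ.filter fun i => 0 < h.eigenvalues i).card = 1 := by
  constructor
  · exact GramK33Aux.rank_Aq
  · intro h
    obtain ⟨i0, hi0⟩ := GramK33Aux.exists_pos h
    rw [Finset.card_eq_one]
    refine ⟨i0, ?_⟩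
    ext j
    simp only [Finset.mem_filter, Finset.mem_univ, true_and, Finset.mem_singleton]
    constructor
    · intro hj
      by_contra hji
      exact GramK33Aux.uniq h j i0 hj hi0 hji
    · intro hj
      rw [hj]; exact hi0
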